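/- For every d ≥ 1 and every d-VASS V = (Q,T) there exists a finite set S of linear path schemes over V such that: (i) for all states p,q ∈ Q and all u,v ∈ ℤ^d, p(u) →*_{ℤ^d} q(v) holds if and only if p(u) →^S_{ℤ^d} q(v) holds; (ii) every ρ ∈ S has length at most 2·|Q|·|T|; and (iii) every ρ ∈ S has at most |T| cycles. -/

import Mathlib

namespace VASS

/-- Integer vectors of dimension `d`. -/
abbrev Vec (d : ℕ) := Fin d → ℤ

/-- A transition of a `d`-VASS: source state, update vector, target state. -/
abbrev Trans (d : ℕ) := ℕ × Vec d × ℕ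

/-- The norm of a vector: maximum of absolute values of its components. -/
def vnorm {d : ℕ} (z : Vec d) : ℕ := Finset.univ.sup fun i => (z i).natAbs

/-- The norm of a transition set. -/
def tnorm {d : ℕ} (T : Finset (Trans d)) : ℕ := T.sup fun t => vnorm t.2.1

/-- The displacement of a word of transitions. -/
def disp {d : ℕ} (π : List (Trans d)) : Vec d := (π.map fun t => t.2.1).sum

/-- `IsPathFrom p q π` : `π` is a path from `p` to `q`. -/
def IsPathFrom {d : ℕ} : ℕ → ℕ → List (Trans d) → Prop
  | p, q, [] => p = q
  | p, q, t :: rest => t.1 = p ∧ IsPathFrom t.2.2 q rest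

/-- ℕ^d as a subset of ℤ^d. -/
def NatSet (d : ℕ) : Set (Vec d) := {v | ∀ i, 0 ≤ v i}

/-- `p(u) →^π_A q(v)`. -/
def Run {d : ℕ} (T : Finset (Trans d)) (A : Set (Vec d)) (p : ℕ) (u : Vec d)
    (q : ℕ) (v : Vec d) (π : List (Trans d)) : Prop :=
  (∀ t ∈ π, t ∈ T) ∧ IsPathFrom p q π ∧ u ∈ A ∧ v = u + disp π ∧
    ∀ i, 1 ≤ i → i ≤ π.length → u + disp (π.take i) ∈ A

/-- `p(u) →*_A q(v)`. -/
def Reach {d : ℕ} (T : Finset (Trans d)) (A : Set (Vec d)) (p : ℕ) (u : Vec d)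
    (q : ℕ) (v : Vec d) : Prop := ∃ π, Run T A p u q v π

/-- A linear path scheme `α₀ β₁* α₁ ⋯ β_k* α_k`, presented as the initial
segment `α₀` together with the list of pairs `(βᵢ, αᵢ)`. -/
abbrev LPS (d : ℕ) := List (Trans d) × List (List (Trans d) × List (Trans d))

/-- The underlying word `α₀ β₁ α₁ ⋯ β_k α_k` of a linear path scheme. -/
def lpsSupport {d : ℕ} (ρ : LPS d) : List (Trans d) :=
  ρ.1 ++ (ρ.2.map fun s => s.1 ++ s.2).flatten

/-- The length of a linear path scheme. -/
def lpsLen {d : ℕ} (ρ : LPS d) : ℕ := (lpsSupport ρ).length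

/-- The number of cycles of a linear path scheme. -/
def numCycles {d : ℕ} (ρ : LPS d) : ℕ := ρ.2.length

/-- `ρ` is a linear path scheme from `p` to `q` over the transition set `T`:
its underlying word uses transitions from `T` and is a path from `p` to `q`,
and each `βᵢ` is a cycle. -/
def IsLPSFrom {d : ℕ} (T : Finset (Trans d)) (p q : ℕ) (ρ : LPS d) : Prop :=
  (∀ t ∈ lpsSupport ρ, t ∈ T) ∧ IsPathFrom p q (lpsSupport ρ) ∧
    ∀ s ∈ ρ.2, s.1 ≠ [] ∧ ∃ r, IsPathFrom r r s.1

/-- The word `α₀ β₁^{e₁} α₁ ⋯ β_k^{e_k} α_k` of a linear path scheme. -/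
def lpsWord {d : ℕ} (ρ : LPS d) (e : List ℕ) : List (Trans d) :=
  ρ.1 ++ (List.zipWith (fun s n => (List.replicate n s.1).flatten ++ s.2) ρ.2 e).flatten

/-- Membership in the language of a linear path scheme. -/
def InLang {d : ℕ} (ρ : LPS d) (π : List (Trans d)) : Prop :=
  ∃ e : List ℕ, e.length = numCycles ρ ∧ π = lpsWord ρ e

/-- `p(u) →^S_A q(v)` for a finite set `S` of linear path schemes. -/
def SReach {d : ℕ} (T : Finset (Trans d)) (S : Finset (LPS d)) (A : Set (Vec d))
    (p : ℕ) (u : Vec d) (q : ℕ) (v : Vec d) : Prop :=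
  ∃ ρ ∈ S, ∃ π, InLang ρ π ∧ Run T A p u q v π

/-- δ(ρ): the set of displacements of words in the language of `ρ`. -/
def DispSet {d : ℕ} (ρ : LPS d) : Set (Vec d) := {z | ∃ π, InLang ρ π ∧ z = disp π}

/-- A quadrant of ℤ². -/
def IsQuadrant (Z : Set (Vec 2)) : Prop :=
  ∃ ε : Fin 2 → Bool, Z = {v | ∀ i, if ε i then 0 ≤ v i else v i ≤ 0}

/-- A linear path scheme is zigzag-free if the displacements of all its cycles
lie in a single quadrant. -/
def ZigzagFree (ρ : LPS 2) : Prop :=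
  ∃ Z, IsQuadrant Z ∧ ∀ s ∈ ρ.2, disp s.1 ∈ Z

section Aux

variable {d : ℕ}

@[simp] lemma isPathFrom_nil {p q : ℕ} : IsPathFrom (d := d) p q [] ↔ p = q := Iff.rfl
@[simp] lemma isPathFrom_cons {p q : ℕ} {t : Trans d} {rest : List (Trans d)} :
    IsPathFrom p q (t :: rest) ↔ t.1 = p ∧ IsPathFrom t.2.2 q rest := Iff.rfl

/-- end state of a walk starting at `a`. -/
def endSt (a : ℕ) (w : List (Trans d)) : ℕ := w.foldl (fun _ t => t.2.2) a

@[simp] lemma endSt_nil (a : ℕ) : endSt a ([] : List (Trans d)) = a := rfl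
@[simp] lemma endSt_cons (a : ℕ) (t : Trans d) (w : List (Trans d)) :
    endSt a (t :: w) = endSt t.2.2 w := rfl
lemma endSt_append (a : ℕ) (x y : List (Trans d)) :
    endSt a (x ++ y) = endSt (endSt a x) y := List.foldl_append ..

lemma IsPathFrom.endSt {a b : ℕ} {w : List (Trans d)} (h : IsPathFrom a b w) :
    endSt a w = b := by
  induction w generalizing a with
  | nil => exact h
  | cons t rest ih => exact ih h.2

lemma isPathFrom_append {a b : ℕ} {x y : List (Trans d)} :
    IsPathFrom a b (x ++ y) ↔ IsPathFrom a (endSt a x) x ∧ IsPathFrom (endSt a x) b y := by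
  induction x generalizing a with
  | nil => simp
  | cons t rest ih =>
    simp only [List.cons_append, isPathFrom_cons, endSt_cons, ih, and_assoc]

lemma IsPathFrom.append {a b c : ℕ} {x y : List (Trans d)}
    (hx : IsPathFrom a b x) (hy : IsPathFrom b c y) : IsPathFrom a c (x ++ y) := by
  rw [isPathFrom_append, hx.endSt]; exact ⟨hx, hy⟩

lemma isPathFrom_flatten_replicate {a : ℕ} {γ : List (Trans d)} (h : IsPathFrom a a γ) :
    ∀ e : ℕ, IsPathFrom a a (List.flatten (List.replicate e γ))
  | 0 => rfl
  | (e+1) => by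
      rw [List.replicate_succ, List.flatten_cons]
      exact h.append (isPathFrom_flatten_replicate h e)




/-- number of transitions in `M` with source `s`. -/
def outC (M : Multiset (Trans d)) (s : ℕ) : ℕ := Multiset.countP (fun t => t.1 = s) M
/-- number of transitions in `M` with target `s`. -/
def inC (M : Multiset (Trans d)) (s : ℕ) : ℕ := Multiset.countP (fun t => t.2.2 = s) M

def IsFlow (M : Multiset (Trans d)) (p q : ℕ) : Prop :=
  ∀ s, outC M s + (if q = s then 1 else 0) = inC M s + (if p = s then 1 else 0)

def IsCirc (M : Multiset (Trans d)) : Prop := ∀ s, outC M s = inC M s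

lemma IsPathFrom.isFlow {p q : ℕ} {π : List (Trans d)} (h : IsPathFrom p q π) :
    IsFlow (π : Multiset (Trans d)) p q := by
  induction π generalizing p with
  | nil => intro s; cases h; simp [outC, inC]
  | cons t rest ih =>
    obtain ⟨ht, hrest⟩ := h
    intro s
    have := ih hrest s
    simp only [outC, inC, Multiset.cons_coe, Multiset.countP_cons] at *
    subst ht
    by_cases h1 : t.1 = s <;> by_cases h2 : t.2.2 = s <;> simp [h1, h2] at * <;> omega

lemma outC_sub {M M' : Multiset (Trans d)} (h : M' ≤ M) (s : ℕ) :
    outC (M - M') s = outC M s - outC M' s := Multiset.countP_sub h _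
lemma inC_sub {M M' : Multiset (Trans d)} (h : M' ≤ M) (s : ℕ) :
    inC (M - M') s = inC M s - inC M' s := Multiset.countP_sub h _
lemma outC_le {M M' : Multiset (Trans d)} (h : M' ≤ M) (s : ℕ) :
    outC M' s ≤ outC M s := Multiset.countP_le_of_le _ h
lemma inC_le {M M' : Multiset (Trans d)} (h : M' ≤ M) (s : ℕ) :
    inC M' s ≤ inC M s := Multiset.countP_le_of_le _ h

lemma isCirc_sub_flow {M M' : Multiset (Trans d)} {p q : ℕ} (hM : IsFlow M p q)
    (hM' : IsFlow M' p q) (h : M' ≤ M) : IsCirc (M - M') := by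
  intro s
  have h1 := hM s; have h2 := hM' s
  have h3 := outC_le h s; have h4 := inC_le h s
  rw [outC_sub h, inC_sub h]
  omega

lemma isCirc_sub_circ {M M' : Multiset (Trans d)} (hM : IsCirc M)
    (hM' : IsCirc M') (h : M' ≤ M) : IsCirc (M - M') := by
  intro s
  have h1 := hM s; have h2 := hM' s
  have h3 := outC_le h s; have h4 := inC_le h s
  rw [outC_sub h, inC_sub h]
  omega

lemma isCirc_nsmul {M : Multiset (Trans d)} (hM : IsCirc M) (n : ℕ) : IsCirc (n • M) := by
  intro s
  simp only [outC, inC, Multiset.countP_nsmul]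
  exact congrArg (n * ·) (hM s)

lemma IsCirc.of_cycle {r : ℕ} {γ : List (Trans d)} (h : IsPathFrom r r γ) :
    IsCirc (γ : Multiset (Trans d)) := by
  intro s
  have := h.isFlow s
  omega


lemma endSt_mem {a : ℕ} {w : List (Trans d)} (h : w ≠ []) :
    ∃ t ∈ w, endSt a w = t.2.2 := by
  induction w generalizing a with
  | nil => exact absurd rfl h
  | cons t rest ih =>
    rcases eq_or_ne rest [] with rfl | hne
    · exact ⟨t, by simp⟩
    · obtain ⟨t', ht', he⟩ := ih (a := t.2.2) hne
      exact ⟨t', List.mem_cons_of_mem _ ht', he⟩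

lemma shorten_aux (Q : Finset ℕ) :
    ∀ n (π : List (Trans d)) (p q : ℕ), π.length ≤ n → IsPathFrom p q π → p ∈ Q →
      (∀ t ∈ π, t.2.2 ∈ Q) →
      ∃ β : List (Trans d), IsPathFrom p q β ∧ (β : Multiset (Trans d)) ≤ (π : Multiset (Trans d)) ∧
        β.length + 1 ≤ Q.card := by
  intro n
  induction n with
  | zero =>
    intro π p q hlen hpath hp _
    have : π = [] := List.length_eq_zero_iff.mp (Nat.le_zero.mp hlen)
    subst this
    exact ⟨[], hpath, le_rfl, by have := Finset.card_pos.mpr ⟨p, hp⟩; omega⟩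
  | succ n ih =>
    intro π p q hlen hpath hp hmem
    by_cases hsmall : π.length + 1 ≤ Q.card
    · exact ⟨π, hpath, le_rfl, hsmall⟩
    -- pigeonhole on the states along the path
    · have hstQ : ∀ i : Fin (π.length + 1), endSt p (π.take i) ∈ Q := by
        intro i
        rcases eq_or_ne (π.take i) [] with he | hne
        · rw [he]; exact hp
        · obtain ⟨t, ht, he⟩ := endSt_mem (a := p) hne
          rw [he]; exact hmem t (List.take_subset _ _ ht)
      obtain ⟨i, -, j, -, hij, hfeq⟩ :=
        Finset.exists_ne_map_eq_of_card_lt_of_maps_to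
          (s := (Finset.univ : Finset (Fin (π.length + 1)))) (t := Q)
          (by simpa using Nat.lt_of_not_le hsmall) (fun i _ => hstQ i)
      -- wlog i < j
      wlog hlt : (i : ℕ) < (j : ℕ) generalizing i j
      · have hne : (i : ℕ) ≠ (j : ℕ) := fun h => hij (Fin.ext h)
        exact this j i hij.symm hfeq.symm (by omega)
      · -- cut out the cycle between positions i and j
        set β' : List (Trans d) := π.take i ++ π.drop j with hβ'
        have hji : (j : ℕ) ≤ π.length := by omega
        have hdecomp : π = π.take i ++ ((π.take j).drop i ++ π.drop j) := by
          conv_lhs => rw [← List.take_append_drop (j : ℕ) π]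
          rw [← List.append_assoc]
          congr 1
          conv_lhs => rw [← List.take_append_drop (i : ℕ) (π.take j)]
          rw [List.take_take, min_eq_left (le_of_lt hlt)]
        have hpath1 : IsPathFrom p (endSt p (π.take i)) (π.take i) := by
          have := (isPathFrom_append (x := π.take i) (y := π.drop i)).mp
            (by rwa [List.take_append_drop])
          exact this.1
        have hpath2 : IsPathFrom (endSt p (π.take j)) q (π.drop j) := by
          have := (isPathFrom_append (x := π.take j) (y := π.drop j)).mp
            (by rwa [List.take_append_drop])
          exact this.2
        have hpathβ' : IsPathFrom p q β' := by
          rw [hβ', isPathFrom_append]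
          exact ⟨hpath1, by rw [hfeq]; exact hpath2⟩
        have hle : (β' : Multiset (Trans d)) ≤ (π : Multiset (Trans d)) := by
          conv_rhs => rw [hdecomp]
          simp only [← Multiset.coe_add, hβ']
          exact add_le_add le_rfl (Multiset.le_add_left _ _)
        have hlenβ' : β'.length ≤ n := by
          have h1 : β'.length = (i : ℕ) + (π.length - (j : ℕ)) := by
            simp [hβ', List.length_take, List.length_drop]
            omega
          omega
        obtain ⟨β, h1, h2, h3⟩ := ih β' p q hlenβ' hpathβ' hp
          (fun t ht => hmem t (by
            rcases List.mem_append.mp ht with h | h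
            exacts [List.take_subset _ _ h, List.drop_subset _ _ h]))
        exact ⟨β, h1, le_trans h2 hle, h3⟩

lemma exists_mem_source {C : Multiset (Trans d)} {s : ℕ} (h : 0 < outC C s) :
    ∃ t ∈ C, t.1 = s := by
  obtain ⟨t, ht, hts⟩ := Multiset.countP_pos.mp h
  exact ⟨t, ht, hts⟩

lemma take_drop_cycle {a b : ℕ} {w : List (Trans d)} (h : IsPathFrom a b w)
    (i j : ℕ) (hij : i ≤ j) :
    IsPathFrom (endSt a (w.take i)) (endSt a (w.take j)) ((w.take j).drop i) := by
  have h1 : IsPathFrom a (endSt a (w.take j)) (w.take j) := by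
    have := (isPathFrom_append (x := w.take j) (y := w.drop j)).mp
      (by rwa [List.take_append_drop])
    exact this.1
  have hdec : w.take j = (w.take j).take i ++ (w.take j).drop i :=
    (List.take_append_drop _ _).symm
  have h2 := (isPathFrom_append (x := (w.take j).take i) (y := (w.take j).drop i)).mp
    (by rwa [← hdec])
  rw [List.take_take, min_eq_left hij] at h2
  exact h2.2

lemma source_eq_endSt {a b : ℕ} {w : List (Trans d)} (h : IsPathFrom a b w) :
    ∀ i (hi : i < w.length), (w.get ⟨i, hi⟩).1 = endSt a (w.take i) := by
  induction w generalizing a with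
  | nil => intro i hi; simp at hi
  | cons t rest ih =>
    intro i hi
    match i with
    | 0 => simpa using h.1
    | (i+1) =>
      have := ih h.2 i (by simpa using hi)
      simpa using this

lemma exists_walk {C : Multiset (Trans d)} (hC : IsCirc C) (hne : C ≠ 0) :
    ∀ n, ∃ (r : ℕ) (w : List (Trans d)), IsPathFrom r (endSt r w) w ∧ w.length = n + 1 ∧
      ∀ t ∈ w, t ∈ C := by
  intro n
  induction n with
  | zero =>
    obtain ⟨t, ht⟩ := Multiset.exists_mem_of_ne_zero hne
    exact ⟨t.1, [t], by simp, rfl, by simp [ht]⟩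
  | succ n ih =>
    obtain ⟨r, w, hw, hlen, hmem⟩ := ih
    have hwne : w ≠ [] := by intro h; rw [h] at hlen; simp at hlen
    obtain ⟨t, htw, hte⟩ := endSt_mem (a := r) hwne
    have hin : 0 < inC C (endSt r w) := by
      exact Multiset.countP_pos.mpr ⟨t, hmem t htw, hte.symm⟩
    have hout : 0 < outC C (endSt r w) := by rw [hC]; exact hin
    obtain ⟨t', ht'C, ht's⟩ := exists_mem_source hout
    refine ⟨r, w ++ [t'], ?_, by simp [hlen], ?_⟩
    · rw [isPathFrom_append, hw.endSt]
      refine ⟨hw, ?_⟩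
      simp [endSt_append, ht's]
    · intro u hu
      rcases List.mem_append.mp hu with h | h
      · exact hmem u h
      · simp at h; subst h; exact ht'C

lemma exists_cycle (Q : Finset ℕ) {C : Multiset (Trans d)}
    (hQ : ∀ t ∈ C, t.1 ∈ Q ∧ t.2.2 ∈ Q) (hC : IsCirc C) (hne : C ≠ 0) :
    ∃ (a : ℕ) (γ : List (Trans d)), γ ≠ [] ∧ IsPathFrom a a γ ∧ ∀ t ∈ γ, t ∈ C := by
  obtain ⟨r, w, hw, hlen, hmem⟩ := exists_walk hC hne Q.card
  have hstQ : ∀ i : Fin (Q.card + 2), endSt r (w.take i) ∈ Q := by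
    intro i
    rcases eq_or_ne (w.take i) [] with he | hne'
    · rw [he]
      simp only [endSt_nil]
      -- r is the source of the first transition
      have h0 : 0 < w.length := by omega
      have := source_eq_endSt hw 0 h0
      simp only [List.take_zero, endSt_nil] at this
      rw [← this]
      exact (hQ _ (hmem _ (w.get_mem _))).1
    · obtain ⟨t, ht, he⟩ := endSt_mem (a := r) hne'
      rw [he]
      exact (hQ _ (hmem _ (List.take_subset _ _ ht))).2
  obtain ⟨i, -, j, -, hij, hfeq⟩ :=
    Finset.exists_ne_map_eq_of_card_lt_of_maps_to
      (s := (Finset.univ : Finset (Fin (Q.card + 2)))) (t := Q)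
      (by simp) (fun i _ => hstQ i)
  wlog hlt : (i : ℕ) < (j : ℕ) generalizing i j
  · have hne' : (i : ℕ) ≠ (j : ℕ) := fun h => hij (Fin.ext h)
    exact this j i hij.symm hfeq.symm (by omega)
  · refine ⟨endSt r (w.take i), (w.take j).drop i, ?_, ?_, ?_⟩
    · have : ((w.take j).drop i).length = min (j : ℕ) w.length - i := by
        simp [List.length_drop, List.length_take]
      intro h
      rw [h] at this
      simp only [List.length_nil] at this
      have hj : (j : ℕ) ≤ Q.card + 1 := by omega
      omega
    · have := take_drop_cycle hw i j (le_of_lt hlt)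
      rwa [← hfeq] at this
    · intro t ht
      exact hmem t (List.take_subset _ _ (List.drop_subset _ _ ht))

lemma exists_simple_cycle (Q : Finset ℕ) {C : Multiset (Trans d)}
    (hQ : ∀ t ∈ C, t.1 ∈ Q ∧ t.2.2 ∈ Q) (hC : IsCirc C) (hne : C ≠ 0) :
    ∃ (a : ℕ) (γ : List (Trans d)), γ ≠ [] ∧ IsPathFrom a a γ ∧ γ.Nodup ∧
      (∀ t ∈ γ, t ∈ C) ∧ γ.length ≤ Q.card := by
  classical
  have hex : ∃ k, ∃ (a : ℕ) (γ : List (Trans d)), γ.length = k ∧ γ ≠ [] ∧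
      IsPathFrom a a γ ∧ ∀ t ∈ γ, t ∈ C := by
    obtain ⟨a, γ, h1, h2, h3⟩ := exists_cycle Q hQ hC hne
    exact ⟨γ.length, a, γ, rfl, h1, h2, h3⟩
  obtain ⟨a, γ, hlen, hγne, hγpath, hγmem⟩ := Nat.find_spec hex
  have hmin := fun m (hm : m < Nat.find hex) => Nat.find_min hex hm
  -- sources are pairwise distinct
  have key : ∀ (k k' : Fin ((γ.map (fun t => t.1)).length)), (k : ℕ) < (k' : ℕ) →
      (γ.map (fun t => t.1)).get k = (γ.map (fun t => t.1)).get k' → False := by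
    intro k k' hlt hkk'
    · have hk : (k : ℕ) < γ.length := by
        have := k.2; simpa using this
      have hk' : (k' : ℕ) < γ.length := by
        have := k'.2; simpa using this
      have e1 : endSt a (γ.take k) = endSt a (γ.take k') := by
        have g1 := source_eq_endSt hγpath k hk
        have g2 := source_eq_endSt hγpath k' hk'
        rw [← g1, ← g2]
        have := hkk'
        simp only [List.get_eq_getElem, List.getElem_map] at this ⊢
        exact this
      -- shorter cycle
      have hcyc := take_drop_cycle hγpath k k' (le_of_lt hlt)
      rw [← e1] at hcyc
      have hlenmid : ((γ.take k').drop k).length = (k' : ℕ) - (k : ℕ) := by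
        simp [List.length_drop, List.length_take]
        omega
      have : ((k' : ℕ) - (k : ℕ)) < Nat.find hex := by omega
      exact hmin _ this ⟨endSt a (γ.take k), (γ.take k').drop k, hlenmid, by
        intro h; rw [h] at hlenmid; simp at hlenmid; omega, hcyc,
        fun t ht => hγmem t (List.take_subset _ _ (List.drop_subset _ _ ht))⟩
  have hsrc : (γ.map (fun t => t.1)).Nodup := by
    rw [List.nodup_iff_injective_get]
    intro k k' hkk'
    by_contra hne'
    have hne'' : (k : ℕ) ≠ (k' : ℕ) := fun h => hne' (Fin.ext h)
    rcases lt_or_gt_of_ne hne'' with h | h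
    · exact key k k' h hkk'
    · exact key k' k h hkk'.symm
  refine ⟨a, γ, hγne, hγpath, hsrc.of_map _, hγmem, ?_⟩
  have h1 : (γ.map (fun t => t.1)).toFinset ⊆ Q := by
    intro s hs
    simp only [List.mem_toFinset, List.mem_map] at hs
    obtain ⟨t, ht, rfl⟩ := hs
    exact (hQ t (hγmem t ht)).1
  have h2 := Finset.card_le_card h1
  rw [List.toFinset_card_of_nodup hsrc] at h2
  simpa using h2

/-- bound function for total cycle length in the greedy decomposition. -/
def fBnd (q : ℕ) : ℕ → ℕ
  | 0 => 0
  | (n+1) => fBnd q n + min q (n+1)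

lemma fBnd_mono (q : ℕ) : Monotone (fBnd q) := by
  apply monotone_nat_of_le_succ
  intro n
  simp [fBnd]

lemma fBnd_le (q : ℕ) (hq : 1 ≤ q) : ∀ n, 1 ≤ n → 2 * fBnd q n + q ≤ 2 * q * n + 1 := by
  intro n
  induction n with
  | zero => omega
  | succ n ih =>
    intro _
    rcases Nat.eq_zero_or_pos n with rfl | hn
    · have h1 : min q 1 = 1 := min_eq_right hq
      show 2 * (fBnd q 0 + min q 1) + q ≤ 2 * q * 1 + 1
      rw [h1, mul_one]
      simp only [fBnd]
      omega
    · have h1 := ih hn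
      have h2 : min q (n+1) ≤ q := min_le_left _ _
      have e1 : 2 * q * n = 2 * (q * n) := by ring
      have e2 : 2 * q * (n+1) = 2 * (q * n + q) := by ring
      rw [e1] at h1
      show 2 * (fBnd q n + min q (n+1)) + q ≤ 2 * q * (n+1) + 1
      rw [e2]
      omega

lemma decomp (Q : Finset ℕ) :
    ∀ n (C : Multiset (Trans d)), C.toFinset.card ≤ n → IsCirc C →
      (∀ t ∈ C, t.1 ∈ Q ∧ t.2.2 ∈ Q) →
      ∃ L : List (List (Trans d) × ℕ),
        C = (L.map fun s => s.2 • (s.1 : Multiset (Trans d))).sum ∧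
        L.length ≤ C.toFinset.card ∧
        (∀ s ∈ L, s.1 ≠ [] ∧ (∃ a, IsPathFrom a a s.1) ∧ 1 ≤ s.2 ∧ s.1.length ≤ Q.card ∧
          ∀ t ∈ s.1, t ∈ C) ∧
        (L.map fun s => s.1.length).sum ≤ fBnd Q.card C.toFinset.card := by
  intro n
  induction n with
  | zero =>
    intro C hcard _ _
    have : C.toFinset = ∅ := Finset.card_eq_zero.mp (Nat.le_zero.mp hcard)
    have hC0 : C = 0 := by
      rwa [Multiset.toFinset_eq_empty] at this
    subst hC0
    exact ⟨[], by simp, by simp, by simp, by simp⟩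
  | succ n ih =>
    intro C hcard hcirc hQmem
    rcases eq_or_ne C 0 with rfl | hne
    · exact ⟨[], by simp, by simp, by simp, by simp⟩
    obtain ⟨a, γ, hγne, hγpath, hγnd, hγmem, hγlen⟩ := exists_simple_cycle Q hQmem hcirc hne
    have hγfne : γ.toFinset.Nonempty := by
      obtain ⟨t, ht⟩ := List.exists_mem_of_ne_nil _ hγne
      exact ⟨t, List.mem_toFinset.mpr ht⟩
    set m := (γ.toFinset.image fun t => C.count t).min' (hγfne.image _) with hm
    have hm_le : ∀ t ∈ γ, m ≤ C.count t := fun t ht =>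
      Finset.min'_le _ _ (Finset.mem_image_of_mem _ (List.mem_toFinset.mpr ht))
    obtain ⟨tstar, htstar, htstarm⟩ : ∃ t ∈ γ, C.count t = m := by
      have := Finset.min'_mem (γ.toFinset.image fun t => C.count t) (hγfne.image _)
      rw [Finset.mem_image] at this
      obtain ⟨t, ht, he⟩ := this
      exact ⟨t, List.mem_toFinset.mp ht, he⟩
    have hm1 : 1 ≤ m := by
      rw [← htstarm]
      exact Multiset.one_le_count_iff_mem.mpr (hγmem _ htstar)
    have hγndm : (γ : Multiset (Trans d)).Nodup := Multiset.coe_nodup.mpr hγnd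
    have hcount1 : ∀ t ∈ γ, Multiset.count t (γ : Multiset (Trans d)) = 1 := by
      intro t ht
      have h1 := Multiset.nodup_iff_count_le_one.mp hγndm t
      have h2 := Multiset.one_le_count_iff_mem.mpr (Multiset.mem_coe.mpr ht)
      omega
    have hsm : m • (γ : Multiset (Trans d)) ≤ C := by
      rw [Multiset.le_iff_count]
      intro t
      rw [Multiset.count_nsmul]
      by_cases ht : t ∈ γ
      · rw [hcount1 t ht, mul_one]
        exact hm_le t ht
      · rw [Multiset.count_eq_zero_of_notMem (by simpa using ht), mul_zero]
        exact Nat.zero_le _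
    set C' := C - m • (γ : Multiset (Trans d)) with hC'
    have hsub : C' ≤ C := Multiset.sub_le_self _ _
    have hcirc' : IsCirc C' :=
      isCirc_sub_circ hcirc (isCirc_nsmul (IsCirc.of_cycle hγpath) m) hsm
    have htstar0 : tstar ∉ C' := by
      rw [← Multiset.count_eq_zero, hC', Multiset.count_sub, Multiset.count_nsmul,
        hcount1 _ htstar, mul_one, htstarm]
      omega
    have hss : C'.toFinset ⊆ C.toFinset.erase tstar := by
      intro t ht
      rw [Multiset.mem_toFinset] at ht
      rw [Finset.mem_erase, Multiset.mem_toFinset]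
      exact ⟨fun h => htstar0 (h ▸ ht), Multiset.mem_of_le hsub ht⟩
    have htstarC : tstar ∈ C.toFinset := Multiset.mem_toFinset.mpr (hγmem _ htstar)
    have hcard' : C'.toFinset.card ≤ C.toFinset.card - 1 := by
      have := Finset.card_le_card hss
      rwa [Finset.card_erase_of_mem htstarC] at this
    have hcardpos : 1 ≤ C.toFinset.card := by
      obtain ⟨t, ht⟩ := Multiset.exists_mem_of_ne_zero hne
      exact Finset.card_pos.mpr ⟨t, Multiset.mem_toFinset.mpr ht⟩
    obtain ⟨L', hsum', hlen', hprop', hf'⟩ := ih C' (by omega) hcirc'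
      (fun t ht => hQmem t (Multiset.mem_of_le hsub ht))
    refine ⟨(γ, m) :: L', ?_, ?_, ?_, ?_⟩
    · simp only [List.map_cons, List.sum_cons, ← hsum']
      rw [add_comm]
      exact (tsub_add_cancel_of_le hsm).symm
    · simp only [List.length_cons]
      omega
    · intro s hs
      rcases List.mem_cons.mp hs with rfl | hs
      · exact ⟨hγne, ⟨a, hγpath⟩, hm1, hγlen, hγmem⟩
      · obtain ⟨h1, h2, h3, h4, h5⟩ := hprop' s hs
        exact ⟨h1, h2, h3, h4, fun t ht => Multiset.mem_of_le hsub (h5 t ht)⟩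
    · simp only [List.map_cons, List.sum_cons]
      have hγlen2 : γ.length ≤ C.toFinset.card := by
        have h1 : γ.toFinset ⊆ C.toFinset := by
          intro t ht
          exact Multiset.mem_toFinset.mpr (hγmem t (List.mem_toFinset.mp ht))
        have h2 := Finset.card_le_card h1
        rwa [List.toFinset_card_of_nodup hγnd] at h2
      obtain ⟨k, hk⟩ : ∃ k, C.toFinset.card = k + 1 := ⟨C.toFinset.card - 1, by omega⟩
      rw [hk]
      have h3 : fBnd Q.card (k+1) = fBnd Q.card k + min Q.card (k+1) := rfl
      have h4 : (L'.map fun s => s.1.length).sum ≤ fBnd Q.card k :=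
        le_trans hf' (fBnd_mono _ (by omega))
      have h5 : γ.length ≤ min Q.card (k+1) := le_min hγlen (by omega)
      omega

/-! ### Decorated words -/

abbrev Item (d : ℕ) := Trans d ⊕ (List (Trans d) × ℕ)

def dSupp (D : List (Item d)) : List (Trans d) :=
  D.flatMap (Sum.elim (fun t => [t]) (fun s => s.1))

def dWord (D : List (Item d)) : List (Trans d) :=
  D.flatMap (Sum.elim (fun t => [t]) (fun s => (List.replicate s.2 s.1).flatten))

def toLPS : List (Item d) → LPS d
  | [] => ([], [])
  | (Sum.inl t) :: rest => (t :: (toLPS rest).1, (toLPS rest).2)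
  | (Sum.inr s) :: rest => ([], (s.1, (toLPS rest).1) :: (toLPS rest).2)

def exps : List (Item d) → List ℕ
  | [] => []
  | (Sum.inl _) :: rest => exps rest
  | (Sum.inr s) :: rest => s.2 :: exps rest

@[simp] lemma dSupp_nil : dSupp ([] : List (Item d)) = [] := rfl
@[simp] lemma dSupp_cons_inl (t : Trans d) (D : List (Item d)) :
    dSupp (Sum.inl t :: D) = t :: dSupp D := rfl
@[simp] lemma dSupp_cons_inr (s : List (Trans d) × ℕ) (D : List (Item d)) :
    dSupp (Sum.inr s :: D) = s.1 ++ dSupp D := rfl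
@[simp] lemma dSupp_append (A B : List (Item d)) : dSupp (A ++ B) = dSupp A ++ dSupp B :=
  List.flatMap_append ..
@[simp] lemma dWord_nil : dWord ([] : List (Item d)) = [] := rfl
@[simp] lemma dWord_cons_inl (t : Trans d) (D : List (Item d)) :
    dWord (Sum.inl t :: D) = t :: dWord D := rfl
@[simp] lemma dWord_cons_inr (s : List (Trans d) × ℕ) (D : List (Item d)) :
    dWord (Sum.inr s :: D) = (List.replicate s.2 s.1).flatten ++ dWord D := rfl
@[simp] lemma dWord_append (A B : List (Item d)) : dWord (A ++ B) = dWord A ++ dWord B :=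
  List.flatMap_append ..
@[simp] lemma exps_append (A B : List (Item d)) : exps (A ++ B) = exps A ++ exps B := by
  induction A with
  | nil => rfl
  | cons x A ih => cases x <;> simp [exps, ih]
@[simp] lemma dSupp_map_inl (γ : List (Trans d)) : dSupp (γ.map Sum.inl) = γ := by
  induction γ with
  | nil => rfl
  | cons t γ ih => simp [ih]
@[simp] lemma dWord_map_inl (γ : List (Trans d)) : dWord (γ.map Sum.inl) = γ := by
  induction γ with
  | nil => rfl
  | cons t γ ih => simp [ih]
@[simp] lemma exps_map_inl (γ : List (Trans d)) : exps (γ.map Sum.inl) = [] := by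
  induction γ with
  | nil => rfl
  | cons t γ ih => simpa [exps] using ih

lemma lpsSupport_toLPS (D : List (Item d)) : lpsSupport (toLPS D) = dSupp D := by
  induction D with
  | nil => rfl
  | cons x D ih =>
    cases x with
    | inl t => simp only [toLPS, lpsSupport] at *; simp [ih]
    | inr s => simp only [toLPS, lpsSupport] at *; simp [← ih, List.append_assoc]

lemma exps_length_toLPS (D : List (Item d)) : (exps D).length = (toLPS D).2.length := by
  induction D with
  | nil => rfl
  | cons x D ih => cases x <;> simp [toLPS, exps, ih]

lemma lpsWord_toLPS (D : List (Item d)) : lpsWord (toLPS D) (exps D) = dWord D := by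
  induction D with
  | nil => rfl
  | cons x D ih =>
    cases x with
    | inl t => simp only [toLPS, lpsWord, exps] at *; simp [ih]
    | inr s =>
      simp only [toLPS, lpsWord, exps] at *
      simp [← ih, List.append_assoc]

lemma mem_toLPS_cycles {D : List (Item d)} {s : List (Trans d) × List (Trans d)}
    (h : s ∈ (toLPS D).2) : ∃ s', Sum.inr s' ∈ D ∧ s.1 = s'.1 := by
  induction D with
  | nil => simp [toLPS] at h
  | cons x D ih =>
    cases x with
    | inl t =>
      simp only [toLPS] at h
      obtain ⟨s', h1, h2⟩ := ih h
      exact ⟨s', by simp [h1], h2⟩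
    | inr s' =>
      simp only [toLPS] at h
      rcases List.mem_cons.mp h with rfl | h
      · exact ⟨s', by simp, rfl⟩
      · obtain ⟨s'', h1, h2⟩ := ih h
        exact ⟨s'', by simp [h1], h2⟩

lemma dWord_isPathFrom {p q : ℕ} {D : List (Item d)}
    (hsupp : IsPathFrom p q (dSupp D))
    (hstar : ∀ s', Sum.inr s' ∈ D → s'.1 ≠ [] ∧ ∃ r, IsPathFrom r r s'.1) :
    IsPathFrom p q (dWord D) := by
  induction D generalizing p with
  | nil => exact hsupp
  | cons x D ih =>
    cases x with
    | inl t =>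
      rw [dSupp_cons_inl] at hsupp
      exact ⟨hsupp.1, ih hsupp.2 (fun s' hs' => hstar s' (by simp [hs']))⟩
    | inr s =>
      rw [dSupp_cons_inr] at hsupp
      rw [isPathFrom_append] at hsupp
      obtain ⟨hγ, hrest⟩ := hsupp
      obtain ⟨hne, r, hcyc⟩ := hstar s (by simp)
      obtain ⟨t, γ', hs1⟩ : ∃ t γ', s.1 = t :: γ' := by
        cases h : s.1 with
        | nil => exact absurd h hne
        | cons t γ' => exact ⟨t, γ', rfl⟩
      have hpr : p = r := by
        rw [hs1] at hγ hcyc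
        have h1 : t.1 = p := hγ.1
        have h2 : t.1 = r := hcyc.1
        omega
      subst hpr
      have hend : endSt p s.1 = p := hcyc.endSt
      rw [hend] at hrest
      rw [dWord_cons_inr]
      exact (isPathFrom_flatten_replicate hcyc s.2).append (ih hrest
        (fun s' hs' => hstar s' (by simp [hs'])))

/-- states available at plain positions of `D` (or the start state `p`). -/
def inPSt (p : ℕ) (D : List (Item d)) (s : ℕ) : Prop :=
  s = p ∨ ∃ t, Sum.inl t ∈ D ∧ (t.1 = s ∨ t.2.2 = s)

lemma split_at_state {p q s : ℕ} {D : List (Item d)}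
    (hsupp : IsPathFrom p q (dSupp D)) (hs : inPSt p D s) :
    ∃ D₁ D₂, D = D₁ ++ D₂ ∧ endSt p (dSupp D₁) = s := by
  rcases hs with rfl | ⟨t, htD, hts⟩
  · exact ⟨[], D, rfl, rfl⟩
  · obtain ⟨D₁, D₂, rfl⟩ := List.append_of_mem htD
    rcases hts with h1 | h2
    · refine ⟨D₁, Sum.inl t :: D₂, rfl, ?_⟩
      have := (isPathFrom_append (x := dSupp D₁)
        (y := dSupp (Sum.inl t :: D₂))).mp (by rwa [← dSupp_append])
      have h2 := this.2
      rw [dSupp_cons_inl] at h2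
      rw [← h1, h2.1]
    · refine ⟨D₁ ++ [Sum.inl t], D₂, by simp, ?_⟩
      rw [dSupp_append, endSt_append]
      simpa using h2

lemma reach_plain {p : ℕ} {D : List (Item d)} {R : List (List (Trans d) × ℕ)}
    (hdis : ∀ s ∈ R, ∀ t ∈ s.1, ¬ inPSt p D t.1 ∧ ¬ inPSt p D t.2.2) :
    ∀ (w : List (Trans d)) (a b : ℕ), IsPathFrom a b w → inPSt p D a →
      (∀ t ∈ w, Sum.inl t ∈ D ∨ ∃ s ∈ R, t ∈ s.1) → ∀ t ∈ w, Sum.inl t ∈ D := by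
  intro w
  induction w with
  | nil => intro a b _ _ _ t ht; simp at ht
  | cons t₀ w ih =>
    intro a b hpath ha hcov t ht
    have ht₀D : Sum.inl t₀ ∈ D := by
      rcases hcov t₀ (by simp) with h | ⟨s, hs, hts⟩
      · exact h
      · exfalso
        have := (hdis s hs t₀ hts).1
        rw [hpath.1] at this
        exact this ha
    rcases List.mem_cons.mp ht with rfl | ht
    · exact ht₀D
    · exact ih t₀.2.2 b hpath.2 (Or.inr ⟨t₀, ht₀D, Or.inr rfl⟩) (fun u hu => hcov u (by simp [hu])) t ht

lemma exists_touching {p q : ℕ} {π : List (Trans d)} {D : List (Item d)}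
    {R : List (List (Trans d) × ℕ)}
    (hπ : IsPathFrom p q π)
    (hcov : ∀ t ∈ π, Sum.inl t ∈ D ∨ ∃ s ∈ R, t ∈ s.1)
    (hRπ : ∀ s ∈ R, ∀ t ∈ s.1, t ∈ π)
    (hRne : R ≠ []) (hR1 : ∀ s ∈ R, s.1 ≠ []) :
    ∃ s ∈ R, ∃ t ∈ s.1, inPSt p D t.1 ∨ inPSt p D t.2.2 := by
  by_contra hcon
  push_neg at hcon
  have hdis : ∀ s ∈ R, ∀ t ∈ s.1, ¬ inPSt p D t.1 ∧ ¬ inPSt p D t.2.2 := by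
    intro s hs t ht
    have := hcon s hs t ht
    tauto
  obtain ⟨s₀, hs₀⟩ := List.exists_mem_of_ne_nil _ hRne
  obtain ⟨t₀, ht₀⟩ := List.exists_mem_of_ne_nil _ (hR1 s₀ hs₀)
  have ht₀π : t₀ ∈ π := hRπ s₀ hs₀ t₀ ht₀
  have h1 := reach_plain hdis π p q hπ (Or.inl rfl) hcov t₀ ht₀π
  exact (hdis s₀ hs₀ t₀ ht₀).1 (Or.inr ⟨t₀, h1, Or.inl rfl⟩)

lemma rotate_cycle {r : ℕ} {γ : List (Trans d)} (hpath : IsPathFrom r r γ)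
    {t : Trans d} (ht : t ∈ γ) {a : ℕ} (ha : a = t.1 ∨ a = t.2.2) :
    ∃ γ' : List (Trans d), IsPathFrom a a γ' ∧
      (γ' : Multiset (Trans d)) = (γ : Multiset (Trans d)) ∧
      γ'.length = γ.length ∧ γ' ≠ [] := by
  obtain ⟨u, v, rfl⟩ := List.append_of_mem ht
  rw [isPathFrom_append] at hpath
  obtain ⟨hu, htv⟩ := hpath
  have ht1 : t.1 = endSt r u := htv.1
  have hv : IsPathFrom t.2.2 r v := htv.2
  rcases ha with rfl | rfl
  · refine ⟨(t :: v) ++ u, ?_, ?_, by simp; omega, by simp⟩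
    · rw [← ht1] at htv hu
      exact htv.append hu
    · rw [Multiset.coe_eq_coe]
      exact List.perm_append_comm
  · refine ⟨v ++ (u ++ [t]), ?_, ?_, by simp; omega, by simp⟩
    · refine hv.append (hu.append ?_)
      exact ⟨ht1, rfl⟩
    · rw [Multiset.coe_eq_coe]
      have h2 : (u ++ [t]) ++ v = u ++ (t :: v) := by simp
      rw [← h2]
      exact List.perm_append_comm

lemma coe_flatten_replicate (e : ℕ) (γ : List (Trans d)) :
    ((List.replicate e γ).flatten : Multiset (Trans d)) = e • (γ : Multiset (Trans d)) := by
  induction e with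
  | zero => simp
  | succ e ih =>
    rw [List.replicate_succ, List.flatten_cons, ← Multiset.coe_add, ih, succ_nsmul, add_comm]

lemma main_insert {p q : ℕ} {π : List (Trans d)} (hπ : IsPathFrom p q π) :
    ∀ (n : ℕ) (R : List (List (Trans d) × ℕ)) (D : List (Item d)), R.length ≤ n →
      IsPathFrom p q (dSupp D) →
      (∀ s', Sum.inr s' ∈ D → s'.1 ≠ [] ∧ ∃ r, IsPathFrom r r s'.1) →
      ((dWord D : Multiset (Trans d)) +
        (R.map fun s => s.2 • (s.1 : Multiset (Trans d))).sum = (π : Multiset (Trans d))) →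
      (∀ t ∈ π, Sum.inl t ∈ D ∨ ∃ s ∈ R, t ∈ s.1) →
      (∀ s ∈ R, s.1 ≠ [] ∧ (∃ a, IsPathFrom a a s.1) ∧ 1 ≤ s.2 ∧ ∀ t ∈ s.1, t ∈ π) →
      ∃ D' : List (Item d),
        IsPathFrom p q (dSupp D') ∧
        (∀ s', Sum.inr s' ∈ D' → s'.1 ≠ [] ∧ ∃ r, IsPathFrom r r s'.1) ∧
        (dWord D' : Multiset (Trans d)) = (π : Multiset (Trans d)) ∧
        (dSupp D').length ≤ (dSupp D).length + 2 * (R.map fun s => s.1.length).sum ∧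
        (exps D').length ≤ (exps D).length + R.length ∧
        (∀ t ∈ dSupp D', t ∈ dSupp D ∨ t ∈ π) := by
  intro n
  induction n with
  | zero =>
    intro R D hlen hsupp hstar hms _ _
    have hR : R = [] := List.length_eq_zero_iff.mp (Nat.le_zero.mp hlen)
    subst hR
    simp only [List.map_nil, List.sum_nil, add_zero] at hms
    exact ⟨D, hsupp, hstar, hms, by simp, by simp, fun t ht => Or.inl ht⟩
  | succ n ih =>
    intro R D hlen hsupp hstar hms hcov hR
    rcases eq_or_ne R [] with rfl | hRne
    · simp only [List.map_nil, List.sum_nil, add_zero] at hms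
      exact ⟨D, hsupp, hstar, hms, by simp, by simp, fun t ht => Or.inl ht⟩
    -- find a cycle touching the plain states
    obtain ⟨s₀, hs₀R, t₀, ht₀, htouch⟩ :=
      exists_touching hπ hcov (fun s hs => (hR s hs).2.2.2) hRne (fun s hs => (hR s hs).1)
    obtain ⟨hs₀ne, ⟨r₀, hs₀cyc⟩, hs₀m, hs₀π⟩ := hR s₀ hs₀R
    -- the attachment state
    obtain ⟨a, ha, haP⟩ : ∃ a, (a = t₀.1 ∨ a = t₀.2.2) ∧ inPSt p D a := by
      rcases htouch with h | h
      · exact ⟨t₀.1, Or.inl rfl, h⟩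
      · exact ⟨t₀.2.2, Or.inr rfl, h⟩
    obtain ⟨γ', hγ'path, hγ'ms, hγ'len, hγ'ne⟩ := rotate_cycle hs₀cyc ht₀ ha
    obtain ⟨D₁, D₂, rfl, hend⟩ := split_at_state hsupp haP
    set D' : List (Item d) :=
      D₁ ++ (Sum.inr (γ', s₀.2 - 1) :: (γ'.map Sum.inl ++ D₂)) with hD'
    obtain ⟨R₁, R₂, hRsplit⟩ := List.append_of_mem hs₀R
    set R' := R₁ ++ R₂ with hR'
    have hperm : R.Perm (s₀ :: R') := by rw [hRsplit]; exact List.perm_middle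
    have hlenR' : R'.length ≤ n := by
      have := hperm.length_eq
      simp only [List.length_cons] at this
      omega
    -- path decomposition of the old support
    have hsupp12 := (isPathFrom_append (x := dSupp D₁) (y := dSupp D₂)).mp
      (by rwa [← dSupp_append])
    rw [hend] at hsupp12
    -- new support
    have hsuppD' : dSupp D' = dSupp D₁ ++ (γ' ++ (γ' ++ dSupp D₂)) := by
      simp [hD']
    have hsupp' : IsPathFrom p q (dSupp D') := by
      rw [hsuppD', isPathFrom_append, hend]
      exact ⟨hsupp12.1, hγ'path.append (hγ'path.append hsupp12.2)⟩
    -- stars of the new decoration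
    have hstar' : ∀ s', Sum.inr s' ∈ D' → s'.1 ≠ [] ∧ ∃ r, IsPathFrom r r s'.1 := by
      intro s' hs'
      rw [hD'] at hs'
      rcases List.mem_append.mp hs' with h | h
      · exact hstar s' (List.mem_append.mpr (Or.inl h))
      · rcases List.mem_cons.mp h with he | h
        · cases he
          exact ⟨hγ'ne, a, hγ'path⟩
        · rcases List.mem_append.mp h with h | h
          · exfalso
            obtain ⟨u, -, habs⟩ := List.mem_map.mp h
            exact Sum.inl_ne_inr habs
          · exact hstar s' (List.mem_append.mpr (Or.inr h))
    -- multiset bookkeeping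
    have hsum_perm : (R.map fun s => s.2 • (s.1 : Multiset (Trans d))).sum =
        s₀.2 • (s₀.1 : Multiset (Trans d)) +
          (R'.map fun s => s.2 • (s.1 : Multiset (Trans d))).sum := by
      have := (hperm.map fun s => s.2 • (s.1 : Multiset (Trans d))).sum_eq
      simpa using this
    have hwordD' : (dWord D' : Multiset (Trans d)) =
        (dWord (D₁ ++ D₂) : Multiset (Trans d)) + s₀.2 • (s₀.1 : Multiset (Trans d)) := by
      have h1 : dWord D' = dWord D₁ ++ ((List.replicate (s₀.2 - 1) γ').flatten ++ (γ' ++ dWord D₂)) := by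
        simp [hD']
      rw [h1, dWord_append]
      simp only [← Multiset.coe_add, coe_flatten_replicate, hγ'ms]
      have : (s₀.2 - 1) • (s₀.1 : Multiset (Trans d)) + (s₀.1 : Multiset (Trans d)) =
          s₀.2 • (s₀.1 : Multiset (Trans d)) := by
        rw [← succ_nsmul]
        congr 1
        omega
      rw [← this]
      abel
    have hms' : (dWord D' : Multiset (Trans d)) +
        (R'.map fun s => s.2 • (s.1 : Multiset (Trans d))).sum = (π : Multiset (Trans d)) := by
      rw [hwordD', ← hms, hsum_perm]
      abel
    -- coverage
    have hcov' : ∀ t ∈ π, Sum.inl t ∈ D' ∨ ∃ s ∈ R', t ∈ s.1 := by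
      intro t ht
      rcases hcov t ht with h | ⟨s, hs, hts⟩
      · left
        rw [hD']
        rcases List.mem_append.mp h with h | h
        · exact List.mem_append.mpr (Or.inl h)
        · exact List.mem_append.mpr (Or.inr (List.mem_cons_of_mem _
            (List.mem_append.mpr (Or.inr h))))
      · rcases List.mem_cons.mp (hperm.mem_iff.mp hs) with rfl | hs'
        · left
          rw [hD']
          have htγ' : t ∈ γ' := by
            have h' : t ∈ (γ' : Multiset (Trans d)) := by
              rw [hγ'ms]; exact Multiset.mem_coe.mpr hts
            exact Multiset.mem_coe.mp h'
          exact List.mem_append.mpr (Or.inr (List.mem_cons_of_mem _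
            (List.mem_append.mpr (Or.inl (List.mem_map_of_mem htγ')))))
        · exact Or.inr ⟨s, hs', hts⟩
    have hR'' : ∀ s ∈ R', s.1 ≠ [] ∧ (∃ a, IsPathFrom a a s.1) ∧ 1 ≤ s.2 ∧ ∀ t ∈ s.1, t ∈ π :=
      fun s hs => hR s (hperm.mem_iff.mpr (List.mem_cons_of_mem _ hs))
    obtain ⟨D'', h1, h2, h3, h4, h5, h6⟩ := ih R' D' hlenR' hsupp' hstar' hms' hcov' hR''
    refine ⟨D'', h1, h2, h3, ?_, ?_, ?_⟩
    · -- length accounting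
      have e1 : (dSupp D').length = (dSupp (D₁ ++ D₂)).length + 2 * γ'.length := by
        rw [hsuppD', dSupp_append]
        simp
        omega
      have e2 : (R.map fun s => s.1.length).sum = s₀.1.length + (R'.map fun s => s.1.length).sum := by
        have := (hperm.map fun s => s.1.length).sum_eq
        simpa using this
      rw [e2]
      rw [e1, hγ'len] at h4
      omega
    · have e3 : (exps D').length = (exps (D₁ ++ D₂)).length + 1 := by
        rw [hD']
        simp [exps]
        omega
      rw [e3] at h5
      have : R.length = R'.length + 1 := by
        have := hperm.length_eq
        simpa using this
      omega
    · intro t ht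
      rcases h6 t ht with h | h
      · rw [hsuppD'] at h
        rcases List.mem_append.mp h with h | h
        · exact Or.inl (by rw [dSupp_append]; exact List.mem_append.mpr (Or.inl h))
        · rcases List.mem_append.mp h with h | h
          · refine Or.inr (hs₀π t ?_)
            rw [← Multiset.mem_coe, ← hγ'ms, Multiset.mem_coe]
            exact h
          · rcases List.mem_append.mp h with h | h
            · refine Or.inr (hs₀π t ?_)
              rw [← Multiset.mem_coe, ← hγ'ms, Multiset.mem_coe]
              exact h
            · exact Or.inl (by rw [dSupp_append]; exact List.mem_append.mpr (Or.inr h))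
      · exact Or.inr h

/-! ### Finiteness of the set of short linear path schemes -/

lemma finite_bounded_lists {α : Type*} {X : Set α} (hX : X.Finite) :
    ∀ n : ℕ, {l : List α | l.length ≤ n ∧ ∀ x ∈ l, x ∈ X}.Finite := by
  intro n
  induction n with
  | zero =>
    apply Set.Finite.subset (Set.finite_singleton [])
    rintro l ⟨hl, -⟩
    simp only [Nat.le_zero, List.length_eq_zero_iff] at hl
    simp [hl]
  | succ n ih =>
    apply Set.Finite.subset (Set.Finite.insert [] (Set.Finite.image2 List.cons hX ih))
    rintro l ⟨hl, hmem⟩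
    cases l with
    | nil => simp
    | cons x xs =>
      right
      refine Set.mem_image2_of_mem (hmem x (by simp)) ?_
      exact ⟨by simpa using hl, fun y hy => hmem y (by simp [hy])⟩

lemma disp_eq_of_coe_eq {w₁ w₂ : List (Trans d)}
    (h : (w₁ : Multiset (Trans d)) = (w₂ : Multiset (Trans d))) : disp w₁ = disp w₂ := by
  have hperm : w₁.Perm w₂ := Multiset.coe_eq_coe.mp h
  exact (hperm.map fun t => t.2.1).sum_eq

lemma mem_sum_cycles {L : List (List (Trans d) × ℕ)} {t : Trans d}
    (h : t ∈ (L.map fun s => s.2 • (s.1 : Multiset (Trans d))).sum) :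
    ∃ s ∈ L, t ∈ s.1 := by
  induction L with
  | nil => simp at h
  | cons s L ih =>
    simp only [List.map_cons, List.sum_cons] at h
    rcases Multiset.mem_add.mp h with h | h
    · refine ⟨s, by simp, ?_⟩
      have hc := Multiset.count_pos.mpr h
      rw [Multiset.count_nsmul] at hc
      have hcpos : 0 < Multiset.count t (s.1 : Multiset (Trans d)) := by
        by_contra hz
        push_neg at hz
        have h0 : Multiset.count t (s.1 : Multiset (Trans d)) = 0 := Nat.le_zero.mp hz
        rw [h0, mul_zero] at hc
        exact absurd hc (lt_irrefl 0)
      simpa using Multiset.count_pos.mp hcpos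
    · obtain ⟨s', hs', ht⟩ := ih h
      exact ⟨s', by simp [hs'], ht⟩

lemma finite_S (T : Finset (Trans d)) (Lb k : ℕ) :
    {ρ : LPS d | (∃ p q, IsLPSFrom T p q ρ) ∧ lpsLen ρ ≤ Lb ∧ numCycles ρ ≤ k}.Finite := by
  classical
  set S1 : Set (List (Trans d)) := {l | l.length ≤ Lb ∧ ∀ x ∈ l, x ∈ (T : Set (Trans d))}
    with hS1
  have hS1fin : S1.Finite := finite_bounded_lists T.finite_toSet Lb
  set P : Set (List (Trans d) × List (Trans d)) := S1 ×ˢ S1 with hP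
  have hPfin : P.Finite := hS1fin.prod hS1fin
  set S2 : Set (List (List (Trans d) × List (Trans d))) :=
    {l | l.length ≤ k ∧ ∀ x ∈ l, x ∈ P} with hS2
  have hS2fin : S2.Finite := finite_bounded_lists hPfin k
  have himg : {ρ : LPS d | (∃ p q, IsLPSFrom T p q ρ) ∧ lpsLen ρ ≤ Lb ∧ numCycles ρ ≤ k} ⊆
      Set.image2 (fun (a : List (Trans d)) (b : List (List (Trans d) × List (Trans d))) =>
        ((a, b) : LPS d)) S1 S2 := by
    rintro ρ ⟨⟨p, q, hmem, -, -⟩, hlen, hcyc⟩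
    have hsupmem : ∀ t ∈ lpsSupport ρ, t ∈ (T : Set (Trans d)) := fun t ht => hmem t ht
    have hlen1 : ρ.1.length ≤ Lb := by
      have h0 : ρ.1.length ≤ (lpsSupport ρ).length := by
        rw [lpsSupport]; simp
      exact le_trans h0 hlen
    have h1mem : ρ.1 ∈ S1 :=
      ⟨hlen1, fun t ht => hsupmem t (by rw [lpsSupport]; simp [ht])⟩
    have h2mem : ρ.2 ∈ S2 := by
      refine ⟨hcyc, ?_⟩
      intro x hx
      have hxflat : x.1.length + x.2.length ≤ Lb := by
        have h1 : (x.1 ++ x.2).length ≤ ((ρ.2.map fun s => s.1 ++ s.2).flatten).length := by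
          rw [List.length_flatten]
          refine List.single_le_sum (by simp) _ ?_
          simp only [List.map_map]
          exact List.mem_map_of_mem hx
        have h2 : ((ρ.2.map fun s => s.1 ++ s.2).flatten).length ≤ (lpsSupport ρ).length := by
          rw [lpsSupport]; simp
        simp only [List.length_append] at h1
        have := le_trans h2 hlen
        omega
      have hxmem : ∀ t ∈ x.1 ++ x.2, t ∈ (T : Set (Trans d)) := by
        intro t ht
        refine hsupmem t ?_
        rw [lpsSupport]
        refine List.mem_append.mpr (Or.inr ?_)
        rw [List.mem_flatten]
        exact ⟨x.1 ++ x.2, List.mem_map_of_mem hx, ht⟩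
      constructor
      · exact ⟨by omega, fun t ht => hxmem t (by simp [ht])⟩
      · exact ⟨by omega, fun t ht => hxmem t (by simp [ht])⟩
    have : ρ = ((ρ.1, ρ.2) : LPS d) := rfl
    rw [this]
    exact Set.mem_image2_of_mem h1mem h2mem
  exact Set.Finite.subset (Set.Finite.image2 _ hS1fin hS2fin) himg


end Aux

/-- Proposition on Z-reachability. For every `d ≥ 1` and every
`d`-VASS, the ℤ-reachability relation is captured by a finite set of linear path
schemes of length at most `2·|Q|·|T|` with at most `|T|` cycles. -/
theorem statement1 :
    ∀ d : ℕ, 1 ≤ d → ∀ (Q : Finset ℕ) (T : Finset (Trans d)),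
      (∀ t ∈ T, t.1 ∈ Q ∧ t.2.2 ∈ Q) →
      ∃ S : Finset (LPS d),
        (∀ ρ ∈ S, ∃ p q, IsLPSFrom T p q ρ) ∧
        (∀ p ∈ Q, ∀ q ∈ Q, ∀ u v : Vec d,
          (Reach T Set.univ p u q v ↔ SReach T S Set.univ p u q v)) ∧
        (∀ ρ ∈ S, lpsLen ρ ≤ 2 * Q.card * T.card) ∧
        (∀ ρ ∈ S, numCycles ρ ≤ T.card) := by
  intro d _ Q T hT
  classical
  have hfin := finite_S T (2 * Q.card * T.card) T.card
  refine ⟨hfin.toFinset, ?_, ?_, ?_, ?_⟩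
  · intro ρ hρ
    exact (hfin.mem_toFinset.mp hρ).1
  · intro p hp q hq u v
    constructor
    · rintro ⟨π, hTmem, hpath, -, hv, -⟩
      -- the hard direction
      have hst : ∀ t ∈ π, t.1 ∈ Q ∧ t.2.2 ∈ Q := fun t ht => hT t (hTmem t ht)
      obtain ⟨β, hβpath, hβle, hβlen⟩ := shorten_aux Q π.length π p q le_rfl hpath hp
        (fun t ht => (hst t ht).2)
      set C : Multiset (Trans d) := (π : Multiset (Trans d)) - (β : Multiset (Trans d))
        with hC
      have hCle : C ≤ (π : Multiset (Trans d)) := Multiset.sub_le_self _ _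
      have hCπ : ∀ t ∈ C, t ∈ π := by
        intro t ht
        exact Multiset.mem_coe.mp (Multiset.mem_of_le hCle ht)
      have hcirc : IsCirc C := isCirc_sub_flow hpath.isFlow hβpath.isFlow hβle
      have hCQ : ∀ t ∈ C, t.1 ∈ Q ∧ t.2.2 ∈ Q := fun t ht => hst t (hCπ t ht)
      obtain ⟨L, hsum, hlenL, hpropL, hfL⟩ := decomp Q C.toFinset.card C le_rfl hcirc hCQ
      have hβπ : ∀ t ∈ β, t ∈ π := by
        intro t ht
        exact Multiset.mem_coe.mp (Multiset.mem_of_le hβle (Multiset.mem_coe.mpr ht))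
      -- initial decorated word
      set D₀ : List (Item d) := β.map Sum.inl with hD₀
      have hβC : (β : Multiset (Trans d)) + C = (π : Multiset (Trans d)) := by
        rw [hC, add_comm]
        exact tsub_add_cancel_of_le hβle
      obtain ⟨D', h1, h2, h3, h4, h5, h6⟩ := main_insert hpath L.length L D₀ le_rfl
        (by rw [hD₀, dSupp_map_inl]; exact hβpath)
        (by
          intro s' hs'
          exfalso
          obtain ⟨u', -, habs⟩ := List.mem_map.mp hs'
          exact Sum.inl_ne_inr habs)
        (by rw [hD₀, dWord_map_inl, ← hsum]; exact hβC)
        (by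
          intro t ht
          have : t ∈ (β : Multiset (Trans d)) + C := by
            rw [hβC]; exact Multiset.mem_coe.mpr ht
          rcases Multiset.mem_add.mp this with h | h
          · exact Or.inl (List.mem_map_of_mem (Multiset.mem_coe.mp h))
          · right
            rw [hsum] at h
            exact mem_sum_cycles h)
        (by
          intro s hs
          obtain ⟨hne, hcyc, hm, -, hmemC⟩ := hpropL s hs
          exact ⟨hne, hcyc, hm, fun t ht => hCπ t (hmemC t ht)⟩)
      set ρ : LPS d := toLPS D' with hρ
      set w : List (Trans d) := dWord D' with hw
      have hwπmem : ∀ t ∈ w, t ∈ π := by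
        intro t ht
        have : t ∈ (π : Multiset (Trans d)) := by rw [← h3]; exact Multiset.mem_coe.mpr ht
        exact Multiset.mem_coe.mp this
      have hsuppπ : ∀ t ∈ dSupp D', t ∈ π := by
        intro t ht
        rcases h6 t ht with h | h
        · rw [hD₀, dSupp_map_inl] at h
          exact hβπ t h
        · exact h
      have hislps : IsLPSFrom T p q ρ := by
        refine ⟨?_, ?_, ?_⟩
        · intro t ht
          rw [hρ, lpsSupport_toLPS] at ht
          exact hTmem t (hsuppπ t ht)
        · rw [hρ, lpsSupport_toLPS]
          exact h1
        · intro s hs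
          rw [hρ] at hs
          obtain ⟨s', hs'D, heq⟩ := mem_toLPS_cycles hs
          rw [heq]
          exact h2 s' hs'D
      -- length bounds
      have hq1 : 1 ≤ Q.card := Finset.card_pos.mpr ⟨p, hp⟩
      have hnCT : C.toFinset.card ≤ T.card := by
        refine Finset.card_le_card ?_
        intro t ht
        exact hTmem t (hCπ t (Multiset.mem_toFinset.mp ht))
      have hlenD₀ : (dSupp D₀).length = β.length := by rw [hD₀, dSupp_map_inl]
      have hlpslen : lpsLen ρ ≤ 2 * Q.card * T.card := by
        have hlen' : lpsLen ρ = (dSupp D').length := by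
          rw [hρ, lpsLen, lpsSupport_toLPS]
        rw [hlen']
        rcases Nat.eq_zero_or_pos C.toFinset.card with h0 | hpos
        · -- no cycles at all
          have hf0 : fBnd Q.card C.toFinset.card = 0 := by rw [h0]; rfl
          have hsum0 : (L.map fun s => s.1.length).sum = 0 := by
            have := hfL
            rw [hf0] at this
            omega
          rcases eq_or_ne β [] with rfl | hβne
          · simp only [hlenD₀] at h4
            simp only [List.length_nil] at h4
            omega
          · obtain ⟨t, ht⟩ := List.exists_mem_of_ne_nil _ hβne
            have hT1 : 1 ≤ T.card := Finset.card_pos.mpr ⟨t, hTmem t (hβπ t ht)⟩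
            have e1 : 2 * Q.card * T.card = 2 * (Q.card * T.card) := by ring
            have e2 : Q.card * 1 ≤ Q.card * T.card := Nat.mul_le_mul_left _ hT1
            rw [e1]
            rw [hlenD₀, hsum0] at h4
            omega
        · have hfb := fBnd_le Q.card hq1 C.toFinset.card hpos
          have e2 : Q.card * C.toFinset.card ≤ Q.card * T.card :=
            Nat.mul_le_mul_left _ hnCT
          have e3 : 2 * Q.card * C.toFinset.card = 2 * (Q.card * C.toFinset.card) := by ring
          have e4 : 2 * Q.card * T.card = 2 * (Q.card * T.card) := by ring
          rw [e3] at hfb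
          rw [e4]
          rw [hlenD₀] at h4
          have h7 : (L.map fun s => s.1.length).sum ≤ fBnd Q.card C.toFinset.card := hfL
          omega
      have hnum : numCycles ρ ≤ T.card := by
        have e1 : numCycles ρ = (exps D').length := by
          rw [hρ, numCycles, exps_length_toLPS]
        have e2 : (exps D₀).length = 0 := by rw [hD₀, exps_map_inl]; rfl
        rw [e1]
        rw [e2] at h5
        omega
      -- assemble the SReach witness
      refine ⟨ρ, hfin.mem_toFinset.mpr ⟨⟨p, q, hislps⟩, hlpslen, hnum⟩, w, ?_, ?_⟩
      · exact ⟨exps D', (exps_length_toLPS D').symm ▸ rfl, (lpsWord_toLPS D').symm⟩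
      · refine ⟨fun t ht => hTmem t (hwπmem t ht), dWord_isPathFrom h1 h2, trivial, ?_,
          fun i _ _ => trivial⟩
        rw [hv]
        congr 1
        exact (disp_eq_of_coe_eq h3).symm
    · rintro ⟨ρ, hρ, π, hlang, hrun⟩
      exact ⟨π, hrun⟩
  · intro ρ hρ
    exact (hfin.mem_toFinset.mp hρ).2.1
  · intro ρ hρ
    exact (hfin.mem_toFinset.mp hρ).2.2


end VASS
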